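/- A convexity space is a convex geometry if and only if for every copoint C at a point x (a convex set maximal among convex sets not containing x), the set C ∪ {x} is convex. -/

import Mathlib

structure Convexity (X : Type*) where
  sets : Set (Set X)
  empty_mem : ∅ ∈ sets
  sInter_mem : ∀ 𝒞 : Set (Set X), 𝒞 ⊆ sets → ⋂₀ 𝒞 ∈ sets
  directed_sUnion_mem : ∀ 𝒞 : Set (Set X), 𝒞 ⊆ sets → 𝒞.Nonempty →
    DirectedOn (· ⊆ ·) 𝒞 → ⋃₀ 𝒞 ∈ sets

def Convexity.hull {X : Type*} (c : Convexity X) (A : Set X) : Set X :=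
  ⋂₀ {C | C ∈ c.sets ∧ A ⊆ C}

def Convexity.IsConvexGeometry {X : Type*} (c : Convexity X) : Prop :=
  ∀ K ∈ c.sets, ∀ x y : X, x ≠ y → x ∉ K → y ∉ K →
    y ∈ c.hull (K ∪ {x}) → x ∉ c.hull (K ∪ {y})

lemma Convexity.subset_hull {X : Type*} (c : Convexity X) (A : Set X) : A ⊆ c.hull A :=
  fun _ ha => fun _ hC => hC.2 ha

lemma Convexity.hull_mem {X : Type*} (c : Convexity X) (A : Set X) : c.hull A ∈ c.sets :=
  c.sInter_mem _ (fun _ hC => hC.1)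

lemma Convexity.hull_subset {X : Type*} (c : Convexity X) {A D : Set X}
    (hD : D ∈ c.sets) (hAD : A ⊆ D) : c.hull A ⊆ D :=
  Set.sInter_subset_of_mem ⟨hD, hAD⟩

/-- Jamison–Edelman: a convexity space is a convex geometry iff for every copoint
`C` at a point `x`, the set `C ∪ {x}` is convex. -/
theorem convexGeometry_iff_copoint_union {X : Type*} (c : Convexity X) :
    c.IsConvexGeometry ↔
      ∀ (x : X) (C : Set X), C ∈ c.sets → x ∉ C →
        (∀ D ∈ c.sets, C ⊆ D → x ∉ D → C = D) → C ∪ {x} ∈ c.sets := by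
  constructor
  · intro hcg x C hC hxC hmax
    have key : c.hull (C ∪ {x}) ⊆ C ∪ {x} := by
      intro y hy
      by_contra hyn
      rw [Set.mem_union] at hyn
      push_neg at hyn
      obtain ⟨hyC, hyx⟩ := hyn
      rw [Set.mem_singleton_iff] at hyx
      -- x ∈ hull (C ∪ {y}), else maximality gives y ∈ C
      have hx' : x ∈ c.hull (C ∪ {y}) := by
        by_contra hxn
        have := hmax (c.hull (C ∪ {y})) (c.hull_mem _)
          ((Set.subset_union_left).trans (c.subset_hull _)) hxn
        exact hyC (this ▸ c.subset_hull _ (Set.mem_union_right _ rfl))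
      exact hcg C hC x y (Ne.symm hyx) hxC hyC hy hx'
    have : C ∪ {x} = c.hull (C ∪ {x}) :=
      Set.Subset.antisymm (c.subset_hull _) key
    rw [this]
    exact c.hull_mem _
  · intro hcp K hK x y hxy hxK hyK hyhull hxhull
    -- Zorn: maximal convex set containing K avoiding x
    obtain ⟨C, hKC, hCmem, hCmax⟩ := zorn_subset_nonempty
      {D | D ∈ c.sets ∧ x ∉ D}
      (fun ch hch hchain hne => by
        refine ⟨⋃₀ ch, ⟨c.directed_sUnion_mem ch (fun D hD => (hch hD).1) hne
          hchain.directedOn, ?_⟩, fun s hs => Set.subset_sUnion_of_mem hs⟩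
        rintro ⟨D, hD, hxD⟩
        exact (hch hD).2 hxD)
      K ⟨hK, hxK⟩
    obtain ⟨hCmem', hxC⟩ := hCmem
    have hCmax' := fun {D} (hD : D ∈ {D | D ∈ c.sets ∧ x ∉ D}) (h : C ⊆ D) => hCmax hD h
    have hcopt : ∀ D ∈ c.sets, C ⊆ D → x ∉ D → C = D :=
      fun D hD hCD hxD => hCD.antisymm (hCmax' ⟨hD, hxD⟩ hCD)
    have hconv := hcp x C hCmem' hxC hcopt
    have hyC : y ∉ C := by
      intro hyC
      exact hxC (c.hull_subset hCmem'
        (Set.union_subset hKC (Set.singleton_subset_iff.2 hyC)) hxhull)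
    have : y ∈ C ∪ {x} := c.hull_subset hconv
      (Set.union_subset (hKC.trans Set.subset_union_left)
        (Set.singleton_subset_iff.2 (Set.mem_union_right _ rfl))) hyhull
    rcases this with h | h
    · exact hyC h
    · exact hxy h.symm
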